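/- Define Υ ∈ Mat_r(K^sep[[t]]) by Υ_{ij} = f_i^{(j−1)}, where f^{(n)} denotes the n-fold twist Σ a_i^{q^n} t^i of f = Σ a_i t^i. Then for every ε ∈ Gal(K^sep/K), one has ε(Υ^{(1)}) = g_ε·Υ^{(1)}, where ε acts entrywise and coefficientwise. -/

import Mathlib

/-!
Statement 4 (Chang–Papanikolas, Corollary 3.2): Define Υ ∈ Mat_r(K^sep[[t]]) by
Υ_{ij} = f_i^{(j−1)}, where f^{(n)} denotes the n-fold twist ∑ a_i^{qⁿ} tⁱ of f = ∑ a_i tⁱ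
and f₁, …, f_r are the Anderson generating functions.  Then for every ε ∈ Gal(K^sep/K) one
has ε(Υ^{(1)}) = g_ε·Υ^{(1)}, ε acting entrywise and coefficientwise.
-/

noncomputable section
open scoped BigOperators

/-- The `n`-fold twist `f^{(n)} = ∑ aᵢ^{qⁿ} tⁱ` of a power series `f = ∑ aᵢ tⁱ`. -/
def twistPS {L : Type*} [CommRing L] (q n : ℕ) (f : PowerSeries L) : PowerSeries L :=
  PowerSeries.mk fun m => (PowerSeries.coeff m f) ^ q ^ n

/-- Coefficientwise action of a ring automorphism on a power series. -/
def mapAut {L : Type*} [CommRing L] (ε : L ≃+* L) (f : PowerSeries L) : PowerSeries L :=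
  PowerSeries.mk fun m => ε (PowerSeries.coeff m f)

theorem statement4
    -- q a power of the prime p
    (p mq q : ℕ) (hp : p.Prime) (hmq : 0 < mq) (hq : q = p ^ mq)
    -- ℂ∞ ⊇ k̄ ⊇ K^sep ⊇ K
    (Cinf : Type) [Field Cinf] [CharP Cinf p]
    -- the rank r Drinfeld 𝔽q[t]-module ρ_t = θ + κ₁τ + ⋯ + κ_r τ^r, κ_r ≠ 0,
    -- defined over K
    (r : ℕ) (hr : 0 < r)
    (θ : Cinf) (hθ : θ ≠ 0) (κ : Fin r → Cinf)
    (hκr : κ ⟨r - 1, by omega⟩ ≠ 0)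
    -- the exponential function exp_ρ
    (expρ : Cinf → Cinf)
    (hadd : ∀ x y, expρ (x + y) = expρ x + expρ y)
    (hlin : ∀ c x, c ^ q = c → expρ (c * x) = c * expρ x)
    (hfunc : ∀ z, expρ (θ * z) = θ * expρ z + ∑ i, κ i * expρ z ^ q ^ (i.1 + 1))
    -- ω₁, …, ω_r : an A-basis of the period lattice Λ_ρ = ker exp_ρ
    (ω : Fin r → Cinf) (hω : ∀ i, expρ (ω i) = 0)
    (hωind : ∀ a : Fin r → Polynomial Cinf,
      (∀ i j, ((a i).coeff j) ^ q = (a i).coeff j) →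
      ∑ i, (a i).eval θ * ω i = 0 → ∀ i, (a i).eval θ = 0)
    (hωspan : ∀ l, expρ l = 0 → ∃ a : Fin r → Polynomial Cinf,
      (∀ i j, ((a i).coeff j) ^ q = (a i).coeff j) ∧ l = ∑ i, (a i).eval θ * ω i)
    -- K and K^sep
    (K Ksep : Subfield Cinf) (hKK : K ≤ Ksep)
    (hθK : θ ∈ K) (hκK : ∀ i, κ i ∈ K)
    (hξ : ∀ (i : Fin r) (m : ℕ), expρ (ω i / θ ^ (m + 1)) ∈ Ksep)
    -- ε ∈ Gal(K^sep/K)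
    (ε : ↥Ksep ≃+* ↥Ksep) (hε : ∀ x : ↥Ksep, (x : Cinf) ∈ K → ε x = x)
    -- g_ε ∈ GL_r(𝔽q[[t]])
    (g : Matrix (Fin r) (Fin r) (PowerSeries ↥Ksep))
    (hgFq : ∀ i s m, (PowerSeries.coeff m (g i s)) ^ q = PowerSeries.coeff m (g i s))
    (hgunit : IsUnit g.det)
    (htate : ∀ (i : Fin r) (m : ℕ),
      ε ⟨expρ (ω i / θ ^ (m + 1)), hξ i m⟩ =
        ∑ s, ∑ j ∈ Finset.range (m + 1),
          (PowerSeries.coeff j (g i s)) * ⟨expρ (ω s / θ ^ (m - j + 1)), hξ s (m - j)⟩) :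
    -- conclusion : ε(Υ^{(1)}) = g_ε Υ^{(1)}, where Υ_{ij} = f_i^{(j−1)} and
    -- f_i = ∑_m ξ_{i,m} t^m is the i-th Anderson generating function
    ∀ i j : Fin r,
      mapAut ε (twistPS q (j.1 + 1)
          (PowerSeries.mk (fun m => (⟨expρ (ω i / θ ^ (m + 1)), hξ i m⟩ : ↥Ksep)))) =
        ∑ s, g i s * twistPS q (j.1 + 1)
          (PowerSeries.mk (fun m => (⟨expρ (ω s / θ ^ (m + 1)), hξ s m⟩ : ↥Ksep))) := by
  classical
  haveI : Fact p.Prime := ⟨hp⟩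
  haveI : CharP ↥Ksep p := CharP.subring Cinf p Ksep.toSubring
  have hsumQ : ∀ {ι : Type} (s : Finset ι) (f : ι → ↥Ksep) (n : ℕ),
      (∑ x ∈ s, f x) ^ q ^ n = ∑ x ∈ s, f x ^ q ^ n := by
    intro ι s f n
    subst hq
    rw [← pow_mul, sum_pow_char_pow]
  have hfix : ∀ (c : ↥Ksep), c ^ q = c → ∀ n, c ^ q ^ n = c := by
    intro c hc n
    induction n with
    | zero => simp
    | succ n ih => rw [pow_succ, pow_mul, ih, hc]
  intro i j
  ext m
  simp only [mapAut, twistPS, PowerSeries.coeff_mk, map_sum, PowerSeries.coeff_mul,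
    Finset.Nat.sum_antidiagonal_eq_sum_range_succ_mk]
  rw [map_pow, htate i m, hsumQ]
  congr 1
  refine Finset.sum_congr rfl fun s _ => ?_
  rw [hsumQ]
  refine Finset.sum_congr rfl fun k _ => ?_
  rw [mul_pow, hfix _ (hgFq i s k)]
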